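/- If φ(z) = c₀ + c₁z + c₂z² + ⋯ is analytic on the unit disk with Re φ(z) > 0 for all |z| < 1, then |c_n| ≤ 2·Re(c₀) for every n ≥ 1. -/

import Mathlib

open Complex Finset

noncomputable def eN (N : ℕ) (j : ℤ) : ℂ := Complex.exp ((2 * Real.pi * j / N : ℝ) * Complex.I)

lemma eN_abs (N : ℕ) (j : ℤ) : ‖eN N j‖ = 1 := Complex.norm_exp_ofReal_mul_I _

lemma eN_pow (N : ℕ) (j : ℤ) (m : ℕ) : eN N j ^ m = eN N (m * j) := by
  rw [eN, eN, ← Complex.exp_nat_mul]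
  congr 1
  push_cast
  ring

lemma eN_mul (N : ℕ) (a b : ℤ) : eN N a * eN N b = eN N (a + b) := by
  rw [eN, eN, eN, ← Complex.exp_add]
  congr 1
  push_cast
  ring

lemma eN_conj (N : ℕ) (j : ℤ) : (starRingEnd ℂ) (eN N j) = eN N (-j) := by
  rw [eN, eN, ← Complex.exp_conj]
  congr 1
  rw [map_mul, Complex.conj_I, Complex.conj_ofReal]
  push_cast
  ring

lemma eN_one (N : ℕ) (hN : 0 < N) (t : ℤ) : eN N ((N:ℤ) * t) = 1 := by
  have hNne : (N:ℝ) ≠ 0 := Nat.cast_ne_zero.2 hN.ne'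
  rw [eN]
  have h1 : (2 * Real.pi * (((N:ℤ) * t : ℤ) : ℝ) / N : ℝ) = 2 * Real.pi * t := by
    push_cast
    field_simp
  rw [h1]
  have h2 : ((2 * Real.pi * (t:ℝ) : ℝ) : ℂ) * Complex.I = (t:ℂ) * (2 * Real.pi * Complex.I) := by
    push_cast
    ring
  rw [h2, Complex.exp_int_mul_two_pi_mul_I]

lemma eN_ne_one (N : ℕ) (hN : 0 < N) (j : ℤ) (hd : ¬ (N:ℤ) ∣ j) : eN N j ≠ 1 := by
  have hNne : (N:ℝ) ≠ 0 := Nat.cast_ne_zero.2 hN.ne'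
  intro h
  rw [eN, Complex.exp_eq_one_iff] at h
  obtain ⟨m, hm⟩ := h
  have him := congrArg Complex.im hm
  simp at him
  -- him : 2 * π * j / N = m * (2 * π)
  apply hd
  refine ⟨m, ?_⟩
  have hpi := Real.pi_pos
  have : (j : ℝ) = (N : ℝ) * m := by
    field_simp at him
    nlinarith [him]
  exact_mod_cast this

lemma eN_rootsum (N : ℕ) (hN : 0 < N) (j : ℤ) :
    ∑ k ∈ Finset.range N, eN N (k * j) = if (N:ℤ) ∣ j then (N:ℂ) else 0 := by
  by_cases hd : (N:ℤ) ∣ j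
  · obtain ⟨t, rfl⟩ := hd
    rw [if_pos ⟨t, rfl⟩]
    have h1 : ∀ k ∈ Finset.range N, eN N (k * ((N:ℤ) * t)) = 1 := by
      intro k _
      have : (k : ℤ) * ((N:ℤ) * t) = (N:ℤ) * (k * t) := by ring
      rw [this, eN_one N hN]
    rw [Finset.sum_congr rfl h1]
    simp
  · rw [if_neg hd]
    have hne := eN_ne_one N hN j hd
    have hk : ∀ k ∈ Finset.range N, eN N (k * j) = (eN N j) ^ k := by
      intro k _
      rw [eN_pow]
    rw [Finset.sum_congr rfl hk, geom_sum_eq hne]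
    have : eN N j ^ N = 1 := by
      rw [eN_pow]
      have : (N : ℤ) * j = (N:ℤ) * j := rfl
      exact eN_one N hN j
    rw [this]
    simp

lemma tail_bound {g : ℕ → ℂ} {a : ℕ → ℝ} (ha : Summable a) (K : ℕ)
    (h0 : ∀ m < K, g m = 0) (hle : ∀ m, ‖g m‖ ≤ a m) {S : ℂ} (hg : HasSum g S) :
    ‖S‖ ≤ ∑' i, a (i + K) := by
  have hga : Summable (fun m => ‖g m‖) :=
    Summable.of_nonneg_of_le (fun m => norm_nonneg _) hle ha
  have h1 : ‖S‖ ≤ ∑' m, ‖g m‖ := by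
    rw [← hg.tsum_eq]
    exact norm_tsum_le_tsum_norm hga
  have h2 : ∑' m, ‖g m‖ = ∑' i, ‖g (i + K)‖ := by
    rw [← hga.sum_add_tsum_nat_add K]
    have : ∑ i ∈ Finset.range K, ‖g i‖ = 0 := by
      apply Finset.sum_eq_zero
      intro i hi
      rw [h0 i (Finset.mem_range.1 hi), norm_zero]
    rw [this, zero_add]
  have h3 : ∑' i, ‖g (i + K)‖ ≤ ∑' i, a (i + K) := by
    apply Summable.tsum_le_tsum (fun i => hle (i + K))
    · exact (summable_nat_add_iff K).2 hga
    · exact (summable_nat_add_iff K).2 ha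
  linarith

lemma ball_mem (r : ℝ) (hr0 : 0 ≤ r) (hr1 : r < 1) (N : ℕ) (k : ℕ) :
    (r:ℂ) * eN N k ∈ Metric.ball (0:ℂ) 1 := by
  rw [Metric.mem_ball, dist_zero_right, norm_mul]
  have h1 : ‖(r:ℂ)‖ = r := by rw [Complex.norm_real, Real.norm_of_nonneg hr0]
  have h2 : ‖eN N (k:ℤ)‖ = 1 := by
    have := eN_abs N (k:ℤ)
    exact this
  rw [h1, h2, mul_one]
  exact hr1

lemma keysumA (φ : ℂ → ℂ) (c : ℕ → ℂ)
    (hsum : ∀ z ∈ Metric.ball (0:ℂ) 1, HasSum (fun n => c n * z^n) (φ z))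
    (r : ℝ) (hr0 : 0 ≤ r) (hr1 : r < 1) (N : ℕ) (hN : 0 < N) (n : ℕ) :
    HasSum (fun m => c m * (r:ℂ)^m * (if (N:ℤ) ∣ ((m:ℤ) - n) then (N:ℂ) else 0))
      (∑ k ∈ Finset.range N, eN N (-(k * n)) * φ ((r:ℂ) * eN N k)) := by
  have hk : ∀ k ∈ Finset.range N,
      HasSum (fun m => eN N (-(k * n)) * (c m * ((r:ℂ) * eN N k)^m))
        (eN N (-(k * n)) * φ ((r:ℂ) * eN N k)) :=
    fun k _ => (hsum _ (ball_mem r hr0 hr1 N k)).mul_left _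
  have heq : (fun m => c m * (r:ℂ)^m * (if (N:ℤ) ∣ ((m:ℤ) - n) then (N:ℂ) else 0))
      = fun m => ∑ k ∈ Finset.range N, eN N (-(k * n)) * (c m * ((r:ℂ) * eN N k)^m) := by
    funext m
    have hterm : ∀ k ∈ Finset.range N,
        eN N (-(k * n)) * (c m * ((r:ℂ) * eN N k)^m)
          = c m * (r:ℂ)^m * eN N (k * ((m:ℤ) - n)) := by
      intro k _
      rw [mul_pow, eN_pow]
      have : eN N (-(k * n)) * (c m * ((r:ℂ)^m * eN N (m * k)))
          = c m * (r:ℂ)^m * (eN N (m * k) * eN N (-(k * n))) := by ring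
      rw [this, eN_mul]
      congr 2
      ring
    rw [Finset.sum_congr rfl hterm, ← Finset.mul_sum, eN_rootsum N hN]
  rw [heq]
  exact hasSum_sum hk

lemma keysumB (φ : ℂ → ℂ) (c : ℕ → ℂ)
    (hsum : ∀ z ∈ Metric.ball (0:ℂ) 1, HasSum (fun n => c n * z^n) (φ z))
    (r : ℝ) (hr0 : 0 ≤ r) (hr1 : r < 1) (N : ℕ) (hN : 0 < N) (n : ℕ) :
    HasSum (fun m => (starRingEnd ℂ) (c m) * (r:ℂ)^m * (if (N:ℤ) ∣ ((m:ℤ) + n) then (N:ℂ) else 0))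
      (∑ k ∈ Finset.range N, eN N (-(k * n)) * (starRingEnd ℂ) (φ ((r:ℂ) * eN N k))) := by
  have hk : ∀ k ∈ Finset.range N,
      HasSum (fun m => eN N (-(k * n)) * (starRingEnd ℂ) (c m * ((r:ℂ) * eN N k)^m))
        (eN N (-(k * n)) * (starRingEnd ℂ) (φ ((r:ℂ) * eN N k))) := by
    intro k _
    exact (((hsum _ (ball_mem r hr0 hr1 N k)).map (starRingEnd ℂ)
      (Complex.continuous_conj)).mul_left _)
  have heq : (fun m => (starRingEnd ℂ) (c m) * (r:ℂ)^m * (if (N:ℤ) ∣ ((m:ℤ) + n) then (N:ℂ) else 0))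
      = fun m => ∑ k ∈ Finset.range N, eN N (-(k * n)) * (starRingEnd ℂ) (c m * ((r:ℂ) * eN N k)^m) := by
    funext m
    have hterm : ∀ k ∈ Finset.range N,
        eN N (-(k * n)) * (starRingEnd ℂ) (c m * ((r:ℂ) * eN N k)^m)
          = (starRingEnd ℂ) (c m) * (r:ℂ)^m * eN N (k * (-((m:ℤ) + n))) := by
      intro k _
      rw [map_mul, map_pow, map_mul, eN_conj, Complex.conj_ofReal, mul_pow, eN_pow]
      have : eN N (-(k * n)) * ((starRingEnd ℂ) (c m) * ((r:ℂ)^m * eN N (m * -(k:ℤ))))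
          = (starRingEnd ℂ) (c m) * (r:ℂ)^m * (eN N (m * -(k:ℤ)) * eN N (-(k * n))) := by ring
      rw [this, eN_mul]
      congr 2
      ring
    rw [Finset.sum_congr rfl hterm, ← Finset.mul_sum]
    have hs := eN_rootsum N hN (-((m:ℤ) + n))
    simp only [dvd_neg] at hs
    rw [hs]
  rw [heq]
  exact hasSum_sum hk

lemma summable_aux (φ : ℂ → ℂ) (c : ℕ → ℂ)
    (hsum : ∀ z ∈ Metric.ball (0:ℂ) 1, HasSum (fun n => c n * z^n) (φ z))
    (r : ℝ) (hr0 : 0 ≤ r) (hr1 : r < 1) : Summable (fun m => ‖c m‖ * r^m) := by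
  obtain ⟨r', hr'0, hrr', hr'1⟩ : ∃ r', 0 < r' ∧ r < r' ∧ r' < 1 :=
    ⟨(1 + r) / 2, by positivity, by linarith, by linarith⟩
  have hz : (r' : ℂ) ∈ Metric.ball (0:ℂ) 1 := by
    rw [Metric.mem_ball, dist_zero_right, Complex.norm_real, Real.norm_of_nonneg hr'0.le]
    exact hr'1
  have ht : Filter.Tendsto (fun m => ‖c m * (r':ℂ)^m‖) Filter.atTop (nhds 0) := by
    have := (hsum _ hz).summable.tendsto_atTop_zero
    simpa using this.norm
  have hbd : BddAbove (Set.range fun m => ‖c m * (r':ℂ)^m‖) := ht.bddAbove_range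
  obtain ⟨M, hM⟩ := hbd
  have hMle : ∀ m : ℕ, ‖c m‖ * r'^m ≤ M := by
    intro m
    have := hM (Set.mem_range_self (f := fun m => ‖c m * (r':ℂ)^m‖) m)
    rwa [norm_mul, norm_pow, Complex.norm_real, Real.norm_of_nonneg hr'0.le] at this
  have hgeo : Summable (fun m : ℕ => M * (r / r')^m) :=
    (summable_geometric_of_lt_one (by positivity) (by rw [div_lt_one hr'0]; exact hrr')).mul_left M
  apply Summable.of_nonneg_of_le (fun m => by positivity) _ hgeo
  intro m
  have h1 : ‖c m‖ * r^m = (‖c m‖ * r'^m) * (r / r')^m := by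
    rw [div_pow, mul_assoc, mul_comm (r'^m), div_mul_cancel₀ _ (pow_ne_zero m hr'0.ne')]
  rw [h1]
  apply mul_le_mul_of_nonneg_right (hMle m) (by positivity)

lemma ite_norm_le (r : ℝ) (hr0 : 0 ≤ r) (N : ℕ) (w : ℂ) (m : ℕ) (P : Prop) [Decidable P] :
    ‖w * (r:ℂ)^m * (if P then (N:ℂ) else 0)‖ ≤ (N:ℝ) * (‖w‖ * r^m) := by
  rw [norm_mul, norm_mul, norm_pow, Complex.norm_real, Real.norm_of_nonneg hr0]
  have : ‖(if P then (N:ℂ) else 0)‖ ≤ (N:ℝ) := by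
    split
    · rw [Complex.norm_natCast]
    · simp
  calc ‖w‖ * r^m * ‖(if P then (N:ℂ) else 0)‖ ≤ ‖w‖ * r^m * N := by
        apply mul_le_mul_of_nonneg_left this (by positivity)
    _ = (N:ℝ) * (‖w‖ * r^m) := by ring

lemma main_ineq (φ : ℂ → ℂ) (c : ℕ → ℂ)
    (hsum : ∀ z ∈ Metric.ball (0:ℂ) 1, HasSum (fun n => c n * z^n) (φ z))
    (hre : ∀ z ∈ Metric.ball (0:ℂ) 1, 0 < (φ z).re)
    (r : ℝ) (hr0 : 0 ≤ r) (hr1 : r < 1) (n N : ℕ) (hn : 1 ≤ n) (hnN : n < N) :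
    ‖c n‖ * r^n ≤ 2 * (c 0).re + 2 * (∑' i, ‖c (i+N)‖ * r^(i+N))
      + (∑' i, ‖c (i+(N-n))‖ * r^(i+(N-n))) + (∑' i, ‖c (i+(N+n))‖ * r^(i+(N+n))) := by
  have hN : 0 < N := lt_of_le_of_lt (Nat.zero_le n) hnN
  set a : ℕ → ℝ := fun m => ‖c m‖ * r^m with ha_def
  have ha : Summable a := summable_aux φ c hsum r hr0 hr1
  have haN : Summable (fun m => (N:ℝ) * a m) := ha.mul_left _
  -- A
  have hA := keysumA φ c hsum r hr0 hr1 N hN n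
  set fA : ℕ → ℂ := fun m => c m * (r:ℂ)^m * (if (N:ℤ) ∣ ((m:ℤ) - n) then (N:ℂ) else 0) with hfA
  set A : ℂ := ∑ k ∈ Finset.range N, eN N (-(k * n)) * φ ((r:ℂ) * eN N k) with hAdef
  have hfAn : fA n = c n * (r:ℂ)^n * N := by
    rw [hfA]
    simp
  -- bound ‖A - fA n‖
  have hA2 : HasSum (Function.update fA n 0) (A - fA n) := by
    have h := hA.update n 0
    have he : A - fA n = 0 - fA n + A := by ring
    rw [he]
    exact h
  have hAbound : ‖A - fA n‖ ≤ ∑' i, (N:ℝ) * a (i + (N + n)) := by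
    apply tail_bound haN (N + n) _ _ hA2
    · intro m hm
      rcases eq_or_ne m n with rfl | hmn
      · simp
      · rw [Function.update_of_ne hmn, hfA]
        have hnd : ¬ (N:ℤ) ∣ ((m:ℤ) - n) := by
          intro hd
          have habs : ((m:ℤ) - n).natAbs < ((N:ℤ)).natAbs := by
            simp only [Int.natAbs_natCast]
            omega
          have := Int.eq_zero_of_dvd_of_natAbs_lt_natAbs hd habs
          omega
        simp [hnd]
    · intro m
      rcases eq_or_ne m n with rfl | hmn
      · simp
        positivity
      · rw [Function.update_of_ne hmn]
        exact ite_norm_le r hr0 N (c m) m _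
  -- B
  have hB := keysumB φ c hsum r hr0 hr1 N hN n
  set B : ℂ := ∑ k ∈ Finset.range N, eN N (-(k * n)) * (starRingEnd ℂ) (φ ((r:ℂ) * eN N k)) with hBdef
  have hBbound : ‖B‖ ≤ ∑' i, (N:ℝ) * a (i + (N - n)) := by
    apply tail_bound haN (N - n) _ _ hB
    · intro m hm
      have hnd : ¬ (N:ℤ) ∣ ((m:ℤ) + n) := by
        intro hd
        have habs : ((m:ℤ) + n).natAbs < ((N:ℤ)).natAbs := by
          simp only [Int.natAbs_natCast]
          omega
        have := Int.eq_zero_of_dvd_of_natAbs_lt_natAbs hd habs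
        omega
      simp [hnd]
    · intro m
      have h := ite_norm_le r hr0 N ((starRingEnd ℂ) (c m)) m ((N:ℤ) ∣ ((m:ℤ) + n))
      rwa [RCLike.norm_conj] at h
  -- C
  have hC := keysumA φ c hsum r hr0 hr1 N hN 0
  set fC : ℕ → ℂ := fun m => c m * (r:ℂ)^m * (if (N:ℤ) ∣ ((m:ℤ) - (0:ℕ)) then (N:ℂ) else 0) with hfC
  set C : ℂ := ∑ k ∈ Finset.range N, eN N (-(k * ((0:ℕ):ℤ))) * φ ((r:ℂ) * eN N k) with hCdef
  have hfC0 : fC 0 = c 0 * N := by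
    rw [hfC]
    simp
  have hC2 : HasSum (Function.update fC 0 0) (C - fC 0) := by
    have h := hC.update 0 0
    have he : C - fC 0 = 0 - fC 0 + C := by ring
    rw [he]
    exact h
  have hCbound : ‖C - fC 0‖ ≤ ∑' i, (N:ℝ) * a (i + N) := by
    apply tail_bound haN N _ _ hC2
    · intro m hm
      rcases eq_or_ne m 0 with rfl | hmn
      · simp
      · rw [Function.update_of_ne hmn, hfC]
        have hnd : ¬ (N:ℤ) ∣ ((m:ℤ) - (0:ℕ)) := by
          intro hd
          have habs : ((m:ℤ) - (0:ℕ)).natAbs < ((N:ℤ)).natAbs := by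
            simp only [Int.natAbs_natCast]
            omega
          have := Int.eq_zero_of_dvd_of_natAbs_lt_natAbs hd habs
          omega
        simp only [Nat.cast_zero, sub_zero] at hnd ⊢
        simp [hnd]
    · intro m
      rcases eq_or_ne m 0 with rfl | hmn
      · simp
        positivity
      · rw [Function.update_of_ne hmn]
        exact ite_norm_le r hr0 N (c m) m _
  -- A + B bound via Re
  have hCre : C.re = ∑ k ∈ Finset.range N, (φ ((r:ℂ) * eN N k)).re := by
    rw [hCdef, Complex.re_sum]
    apply Finset.sum_congr rfl
    intro k _
    simp [eN]
  have hAB : ‖A + B‖ ≤ 2 * C.re := by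
    rw [hAdef, hBdef, ← Finset.sum_add_distrib]
    have hterm : ∀ k ∈ Finset.range N,
        eN N (-(k * n)) * φ ((r:ℂ) * eN N k) + eN N (-(k * n)) * (starRingEnd ℂ) (φ ((r:ℂ) * eN N k))
          = eN N (-(k * n)) * ((2 * (φ ((r:ℂ) * eN N k)).re : ℝ) : ℂ) := by
      intro k _
      rw [← mul_add, Complex.add_conj]
      try push_cast
      try ring
    rw [Finset.sum_congr rfl hterm]
    calc ‖∑ k ∈ Finset.range N, eN N (-(k * n)) * ((2 * (φ ((r:ℂ) * eN N k)).re : ℝ) : ℂ)‖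
        ≤ ∑ k ∈ Finset.range N, ‖eN N (-(k * n)) * ((2 * (φ ((r:ℂ) * eN N k)).re : ℝ) : ℂ)‖ :=
          norm_sum_le _ _
      _ = ∑ k ∈ Finset.range N, 2 * (φ ((r:ℂ) * eN N k)).re := by
          apply Finset.sum_congr rfl
          intro k _
          rw [norm_mul, Complex.norm_real]
          have h1 : ‖eN N (-(k * n))‖ = 1 := by
            have := eN_abs N (-(k * n))
            exact this
          rw [h1, one_mul, Real.norm_of_nonneg]
          have := hre _ (ball_mem r hr0 hr1 N k)
          positivity
      _ = 2 * C.re := by rw [hCre, Finset.mul_sum]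
  -- combine
  have hCre_le : C.re ≤ (N:ℝ) * (c 0).re + ∑' i, (N:ℝ) * a (i + N) := by
    have h1 : C.re = (C - fC 0).re + ((N:ℝ) * (c 0).re) := by
      rw [hfC0]
      simp [Complex.sub_re, Complex.mul_re]
      ring
    have h2 : (C - fC 0).re ≤ ‖C - fC 0‖ := Complex.re_le_norm _
    linarith
  have hfAnorm : ‖fA n‖ = (N:ℝ) * (‖c n‖ * r^n) := by
    rw [hfAn, norm_mul, norm_mul, norm_pow, Complex.norm_real, Real.norm_of_nonneg hr0,
      Complex.norm_natCast]
    ring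
  have hchain : (N:ℝ) * (‖c n‖ * r^n) ≤ 2 * ((N:ℝ) * (c 0).re + ∑' i, (N:ℝ) * a (i + N))
      + ∑' i, (N:ℝ) * a (i + (N - n)) + ∑' i, (N:ℝ) * a (i + (N + n)) := by
    have t1 : ‖fA n‖ ≤ ‖A + B‖ + ‖B‖ + ‖A - fA n‖ := by
      have e1 : fA n = A - (A - fA n) := by ring
      have e2 : A = (A + B) - B := by ring
      have h1 : ‖fA n‖ ≤ ‖A‖ + ‖A - fA n‖ := by
        calc ‖fA n‖ = ‖A - (A - fA n)‖ := by rw [← e1]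
          _ ≤ ‖A‖ + ‖A - fA n‖ := norm_sub_le _ _
      have h2 : ‖A‖ ≤ ‖A + B‖ + ‖B‖ := by
        calc ‖A‖ = ‖(A + B) - B‖ := by rw [← e2]
          _ ≤ ‖A + B‖ + ‖B‖ := norm_sub_le _ _
      linarith
    rw [hfAnorm] at t1
    have t2 : ‖A + B‖ ≤ 2 * ((N:ℝ) * (c 0).re + ∑' i, (N:ℝ) * a (i + N)) := by
      calc ‖A + B‖ ≤ 2 * C.re := hAB
        _ ≤ _ := by linarith
    linarith
  -- divide by N
  have hNpos : (0:ℝ) < N := Nat.cast_pos.2 hN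
  have htsum1 : ∑' i, (N:ℝ) * a (i + N) = (N:ℝ) * ∑' i, a (i + N) := tsum_mul_left
  have htsum2 : ∑' i, (N:ℝ) * a (i + (N - n)) = (N:ℝ) * ∑' i, a (i + (N - n)) := tsum_mul_left
  have htsum3 : ∑' i, (N:ℝ) * a (i + (N + n)) = (N:ℝ) * ∑' i, a (i + (N + n)) := tsum_mul_left
  rw [htsum1, htsum2, htsum3] at hchain
  have hmul : (N:ℝ) * (‖c n‖ * r^n) ≤ (N:ℝ) * (2 * (c 0).re + 2 * (∑' i, a (i + N))
      + (∑' i, a (i + (N - n))) + (∑' i, a (i + (N + n)))) := by linarith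
  have hdiv := le_of_mul_le_mul_left hmul hNpos
  exact hdiv

theorem caratheodory_coeff (φ : ℂ → ℂ) (c : ℕ → ℂ)
    (hsum : ∀ z ∈ Metric.ball (0:ℂ) 1, HasSum (fun n => c n * z^n) (φ z))
    (hre : ∀ z ∈ Metric.ball (0:ℂ) 1, 0 < (φ z).re) :
    ∀ n : ℕ, 1 ≤ n → ‖c n‖ ≤ 2 * (c 0).re := by
  intro n hn
  have key : ∀ r : ℝ, 0 ≤ r → r < 1 → ‖c n‖ * r^n ≤ 2 * (c 0).re := by
    intro r hr0 hr1
    set a : ℕ → ℝ := fun m => ‖c m‖ * r^m with ha_def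
    set T : ℕ → ℝ := fun K => ∑' i, a (i + K) with hT_def
    have hT : Filter.Tendsto T Filter.atTop (nhds 0) := tendsto_sum_nat_add a
    have h1 : Filter.Tendsto (fun N => 2 * T N) Filter.atTop (nhds 0) := by
      simpa using hT.const_mul 2
    have h2 : Filter.Tendsto (fun N : ℕ => T (N - n)) Filter.atTop (nhds 0) :=
      hT.comp (Filter.tendsto_sub_atTop_nat n)
    have h3 : Filter.Tendsto (fun N : ℕ => T (N + n)) Filter.atTop (nhds 0) :=
      hT.comp (Filter.tendsto_add_atTop_nat n)
    have hF : Filter.Tendsto (fun N : ℕ => 2 * (c 0).re + 2 * T N + T (N - n) + T (N + n))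
        Filter.atTop (nhds (2 * (c 0).re)) := by
      have := ((tendsto_const_nhds (x := 2 * (c 0).re) (f := Filter.atTop (α := ℕ))).add h1).add
        h2 |>.add h3
      simpa using this
    apply ge_of_tendsto hF
    rw [Filter.eventually_atTop]
    refine ⟨n + 1, fun N hN => ?_⟩
    exact main_ineq φ c hsum hre r hr0 hr1 n N hn (by omega)
  have hseq : Filter.Tendsto (fun j : ℕ => ‖c n‖ * (1 - 1/((j:ℝ)+1))^n) Filter.atTop
      (nhds (‖c n‖)) := by
    have hb : Filter.Tendsto (fun j : ℕ => 1 - 1/((j:ℝ)+1)) Filter.atTop (nhds 1) := by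
      have := tendsto_one_div_add_atTop_nhds_zero_nat (𝕜 := ℝ)
      have h := (tendsto_const_nhds (x := (1:ℝ)) (f := Filter.atTop (α := ℕ))).sub this
      simpa using h
    have := (hb.pow n).const_mul (‖c n‖)
    simpa using this
  apply le_of_tendsto hseq
  rw [Filter.eventually_atTop]
  refine ⟨0, fun j _ => ?_⟩
  have hj0 : (0:ℝ) < (j:ℝ) + 1 := by positivity
  have hle : 1/((j:ℝ)+1) ≤ 1 := by
    rw [div_le_one hj0]
    linarith
  have hpos : 0 < 1/((j:ℝ)+1) := by positivity
  exact key _ (by linarith) (by linarith)
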